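/- Let f: {a,b}^J → ℝ where J is finite, let σ_e flip coordinate e, and ρ_e f := (f - f∘σ_e)/2. If f(ω) = dist_ω(u,w) is a first passage percolation distance (a=min weight, b=max weight), then ‖ρ_e f‖_∞ ≤ (b-a)/2 and P[ρ_e f ≠ 0] = 2·P[ρ_e f < 0]; consequently ‖ρ_e f‖_2^2 ≤ (1/2)(b-a)^2 · P[ρ_e f < 0]. -/

import Mathlib

open Finset
set_option linter.unusedSectionVars false

/-- `IsWalk ep u w es` : the list of edges `es` (with endpoint map `ep`) forms a walk
from `u` to `w`: there is a vertex sequence `vs` of length `|es|+1` starting at `u`,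
ending at `w`, whose consecutive pairs are the endpoints of the successive edges. -/
def IsWalk {V J : Type*} (ep : J → V × V) (u w : V) (es : List J) : Prop :=
  ∃ vs : List V, vs.length = es.length + 1 ∧ vs.head? = some u ∧
    vs.getLast? = some w ∧
    ∀ k : ℕ, k < es.length →
      ∃ x y e, vs[k]? = some x ∧ vs[k + 1]? = some y ∧ es[k]? = some e ∧
        (ep e = (x, y) ∨ ep e = (y, x))

/-- The weight of edge `e` in configuration `ω : J → Bool` (`false ↦ a`, `true ↦ b`). -/
noncomputable def wtOf (a b : ℝ) {J : Type*} (ω : J → Bool) (e : J) : ℝ :=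
  if ω e then b else a

/-- The first passage percolation distance from `u` to `w` in the finite graph with
edge set `J` and endpoint map `ep`, under the configuration `ω`. -/
noncomputable def fppDistF (a b : ℝ) {V J : Type*} (ep : J → V × V) (u w : V)
    (ω : J → Bool) : ℝ :=
  sInf {L : ℝ | ∃ es : List J, IsWalk ep u w es ∧ (es.map (wtOf a b ω)).sum = L}

/-- The discrete derivative `ρ_e f = (f - f∘σ_e)/2`. -/
noncomputable def rhoD {J : Type*} [DecidableEq J] (e : J) (f : (J → Bool) → ℝ) :
    (J → Bool) → ℝ :=
  fun ω => (f ω - f (Function.update ω e (!ω e))) / 2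



section
variable {V J : Type*} (ep : J → V × V)

inductive Wk : V → V → List J → Prop
  | nil (u : V) : Wk u u []
  | cons {x y w : V} {e : J} {es : List J}
      (h : ep e = (x, y) ∨ ep e = (y, x)) (hw : Wk y w es) : Wk x w (e :: es)

lemma Wk_append {u w : V} {l₁ l₂ : List J} :
    Wk ep u w (l₁ ++ l₂) ↔ ∃ m, Wk ep u m l₁ ∧ Wk ep m w l₂ := by
  induction l₁ generalizing u with
  | nil =>
    simp only [List.nil_append]
    constructor
    · intro h; exact ⟨u, Wk.nil u, h⟩
    · rintro ⟨m, hm, h⟩; cases hm; exact h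
  | cons e l ih =>
    constructor
    · rintro (_ | ⟨h, hw⟩)
      · obtain ⟨m, h1, h2⟩ := (ih).1 hw
        exact ⟨m, Wk.cons h h1, h2⟩
    · rintro ⟨m, (_ | ⟨h, hw⟩), h2⟩
      exact Wk.cons h ((ih).2 ⟨m, hw, h2⟩)


lemma Wk_of_isWalk {u w : V} {es : List J} (h : IsWalk ep u w es) : Wk ep u w es := by
  obtain ⟨vs, hlen, hhead, hlast, hstep⟩ := h
  induction es generalizing u vs with
  | nil =>
    obtain ⟨v, rfl⟩ := List.length_eq_one_iff.mp hlen
    simp only [List.head?_cons, Option.some.injEq] at hhead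
    simp only [List.getLast?_singleton, Option.some.injEq] at hlast
    subst hhead; subst hlast; exact Wk.nil _
  | cons e es ih =>
    match vs, hlen with
    | v₀ :: v₁ :: vs, hlen =>
      simp only [List.head?_cons, Option.some.injEq] at hhead
      subst hhead
      obtain ⟨x, y, e', hx, hy, he', hep⟩ := hstep 0 (by simp)
      simp only [List.getElem?_cons_zero, List.getElem?_cons_succ,
        Option.some.injEq] at hx hy he'
      subst hx; subst he'; subst hy
      refine Wk.cons hep (ih (vs := v₁ :: vs) ?_ rfl ?_ ?_)
      · simpa using hlen
      · rwa [List.getLast?_cons_cons] at hlast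
      · intro k hk
        obtain ⟨x', y', e'', h1, h2, h3, h4⟩ := hstep (k+1) (by simpa using hk)
        exact ⟨x', y', e'', by simpa using h1, by simpa using h2, by simpa using h3, h4⟩

lemma isWalk_of_Wk {u w : V} {es : List J} (h : Wk ep u w es) : IsWalk ep u w es := by
  induction h with
  | nil u => exact ⟨[u], rfl, rfl, rfl, fun k hk => absurd hk (by simp)⟩
  | @cons x y w e es hep hw ih =>
    obtain ⟨vs, hlen, hhead, hlast, hstep⟩ := ih
    refine ⟨x :: vs, by simp [hlen], rfl, ?_, ?_⟩
    · match vs, hlen with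
      | v₀ :: vs, _ => rwa [List.getLast?_cons_cons]
    · intro k hk
      match k with
      | 0 =>
        refine ⟨x, y, e, by simp, ?_, by simp, hep⟩
        simp only [List.getElem?_cons_succ]
        rw [← List.head?_eq_getElem?, hhead]
      | k + 1 =>
        obtain ⟨x', y', e', h1, h2, h3, h4⟩ := hstep k (by simpa using hk)
        exact ⟨x', y', e', by simpa using h1, by simpa using h2, by simpa using h3, h4⟩

end

section
variable {V J : Type*} [DecidableEq J] (ep : J → V × V)

lemma Wk_reduce (e : J) : ∀ n (es : List J), es.length ≤ n → ∀ {u w : V}, Wk ep u w es →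
    ∃ es', List.Sublist es' es ∧ List.count e es' ≤ 1 ∧ Wk ep u w es' := by
  intro n
  induction n with
  | zero =>
    intro es hes u w hw
    have : es = [] := List.length_eq_zero_iff.mp (Nat.le_zero.mp hes)
    subst this
    exact ⟨[], List.Sublist.refl _, by simp, hw⟩
  | succ n ih =>
    intro es hes u w hw
    by_cases hc : List.count e es ≤ 1
    · exact ⟨es, List.Sublist.refl _, hc, hw⟩
    · push_neg at hc
      have he1 : e ∈ es := by
        rw [← List.count_pos_iff]; omega
      obtain ⟨l₁, t, rfl⟩ := List.append_of_mem he1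
      have he2 : e ∈ l₁ ∨ e ∈ t := by
        by_contra hcon
        push_neg at hcon
        simp [List.count_append, List.count_eq_zero.2 hcon.1,
          List.count_eq_zero.2 hcon.2] at hc
      obtain ⟨A, B, C, hdec⟩ : ∃ A B C : List J,
          l₁ ++ e :: t = A ++ (e :: (B ++ (e :: C))) := by
        rcases he2 with h | h
        · obtain ⟨m₁, m₂, rfl⟩ := List.append_of_mem h
          exact ⟨m₁, m₂, t, by simp⟩
        · obtain ⟨m₁, m₂, rfl⟩ := List.append_of_mem h
          exact ⟨l₁, m₁, m₂, by simp⟩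
      rw [hdec] at hw hes ⊢
      clear hdec hc he1 he2
      obtain ⟨p, hA, hrest⟩ := (Wk_append ep).1 hw
      rcases hrest with _ | @⟨_, q, _, _, _, h1, hrest⟩
      obtain ⟨r, hB, hrest2⟩ := (Wk_append ep).1 hrest
      rcases hrest2 with _ | @⟨_, s, _, _, _, h2, hC⟩
      have hlen : (A ++ (e :: C)).length ≤ n := by
        simp at hes ⊢; omega
      have hAC : List.Sublist (A ++ C) (A ++ (e :: C)) :=
        (List.Sublist.refl A).append (List.sublist_cons_self e C)
      have hnew : ∃ es₂, List.Sublist es₂ (A ++ (e :: C)) ∧ Wk ep u w es₂ := by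
        rcases h1 with h1 | h1 <;> rcases h2 with h2 | h2 <;> rw [h1] at h2
        · obtain ⟨rfl, rfl⟩ : p = r ∧ q = s := by simpa [Prod.ext_iff] using h2
          exact ⟨_, List.Sublist.refl _, (Wk_append ep).2 ⟨p, hA, Wk.cons (Or.inl h1) hC⟩⟩
        · obtain ⟨rfl, rfl⟩ : p = s ∧ q = r := by simpa [Prod.ext_iff] using h2
          exact ⟨A ++ C, hAC, (Wk_append ep).2 ⟨p, hA, hC⟩⟩
        · obtain ⟨rfl, rfl⟩ : q = r ∧ p = s := by simpa [Prod.ext_iff] using h2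
          exact ⟨A ++ C, hAC, (Wk_append ep).2 ⟨p, hA, hC⟩⟩
        · obtain ⟨rfl, rfl⟩ : q = s ∧ p = r := by simpa [Prod.ext_iff] using h2
          exact ⟨_, List.Sublist.refl _, (Wk_append ep).2 ⟨p, hA, Wk.cons (Or.inr h1) hC⟩⟩
      obtain ⟨es₂, hsub₂, hw₂⟩ := hnew
      obtain ⟨es', hsub, hcount, hw'⟩ := ih es₂ (hsub₂.length_le.trans hlen) hw₂
      refine ⟨es', (hsub.trans hsub₂).trans ?_, hcount, hw'⟩
      exact (List.Sublist.refl A).append ((List.cons_sublist_cons).2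
        ((List.sublist_cons_self e C).trans (List.sublist_append_right B (e :: C))))

omit [DecidableEq J] in
lemma sublist_sum_le {es' es : List J} (h : List.Sublist es' es) (f : J → ℝ)
    (hf : ∀ j, 0 ≤ f j) : (es'.map f).sum ≤ (es.map f).sum := by
  induction h with
  | slnil => simp
  | cons j h ih =>
    simp only [List.map_cons, List.sum_cons]; linarith [hf j]
  | cons_cons j h ih =>
    simp only [List.map_cons, List.sum_cons]; linarith

lemma sum_wt_update (a b : ℝ) (ω : J → Bool) (e : J) (es : List J) :
    (es.map (wtOf a b (Function.update ω e true))).sum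
      = (es.map (wtOf a b (Function.update ω e false))).sum + (b - a) * es.count e := by
  induction es with
  | nil => simp
  | cons j es ih =>
    by_cases hj : j = e
    · subst hj
      simp only [List.map_cons, List.sum_cons, List.count_cons, ih, wtOf,
        Function.update_self, if_true, if_false]
      push_cast
      simp only [beq_self_eq_true, if_true]
      ring
    · simp only [List.map_cons, List.sum_cons, List.count_cons, ih, wtOf,
        Function.update_of_ne hj, if_neg hj]
      push_cast
      have hje : ((j == e) = true) = False := by simp [hj]
      simp only [hje, if_false]
      ring

end


section
variable {V J : Type*} [DecidableEq J] {a b : ℝ} {ep : J → V × V} {u w : V}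

lemma wt_nonneg (ha : 0 < a) (hb : a < b) (ω : J → Bool) (j : J) : 0 ≤ wtOf a b ω j := by
  unfold wtOf; split <;> linarith

lemma sum_wt_nonneg (ha : 0 < a) (hb : a < b) (ω : J → Bool) (es : List J) :
    0 ≤ (es.map (wtOf a b ω)).sum := by
  apply List.sum_nonneg
  rintro x hx
  obtain ⟨j, _, rfl⟩ := List.mem_map.1 hx
  exact wt_nonneg ha hb ω j

lemma fpp_bddBelow (ha : 0 < a) (hb : a < b) (ω : J → Bool) :
    BddBelow {L : ℝ | ∃ es : List J, IsWalk ep u w es ∧ (es.map (wtOf a b ω)).sum = L} :=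
  ⟨0, by rintro L ⟨es, _, rfl⟩; exact sum_wt_nonneg ha hb ω es⟩

lemma fpp_le_sum (ha : 0 < a) (hb : a < b) (ω : J → Bool) {es : List J}
    (hw : IsWalk ep u w es) :
    fppDistF a b ep u w ω ≤ (es.map (wtOf a b ω)).sum :=
  csInf_le (fpp_bddBelow ha hb ω) ⟨es, hw, rfl⟩

lemma fpp_mono (ha : 0 < a) (hb : a < b) (hconn : ∃ es : List J, IsWalk ep u w es)
    (e : J) (ω : J → Bool) :
    fppDistF a b ep u w (Function.update ω e false)
      ≤ fppDistF a b ep u w (Function.update ω e true) := by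
  apply le_csInf
  · obtain ⟨es, hw⟩ := hconn; exact ⟨_, es, hw, rfl⟩
  · rintro L ⟨es, hw, rfl⟩
    refine (fpp_le_sum ha hb _ hw).trans ?_
    rw [sum_wt_update]
    have h0 : (0:ℝ) ≤ (b - a) * es.count e := by
      apply mul_nonneg (by linarith) (by positivity)
    linarith

lemma fpp_lip (ha : 0 < a) (hb : a < b) (hconn : ∃ es : List J, IsWalk ep u w es)
    (e : J) (ω : J → Bool) :
    fppDistF a b ep u w (Function.update ω e true)
      ≤ fppDistF a b ep u w (Function.update ω e false) + (b - a) := by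
  have hbound : ∀ L ∈ {L : ℝ | ∃ es : List J, IsWalk ep u w es ∧
      (es.map (wtOf a b (Function.update ω e false))).sum = L},
      fppDistF a b ep u w (Function.update ω e true) - (b - a) ≤ L := by
    rintro L ⟨es, hw, rfl⟩
    obtain ⟨es', hsub, hcount, hw'⟩ :=
      Wk_reduce ep e es.length es le_rfl (Wk_of_isWalk ep hw)
    have h1 : fppDistF a b ep u w (Function.update ω e true)
        ≤ (es'.map (wtOf a b (Function.update ω e true))).sum :=
      fpp_le_sum ha hb _ (isWalk_of_Wk ep hw')
    rw [sum_wt_update] at h1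
    have h2 : (es'.map (wtOf a b (Function.update ω e false))).sum
        ≤ (es.map (wtOf a b (Function.update ω e false))).sum :=
      sublist_sum_le hsub _ (wt_nonneg ha hb _)
    have h3 : (b - a) * (es'.count e : ℝ) ≤ (b - a) * 1 := by
      apply mul_le_mul_of_nonneg_left _ (by linarith)
      exact_mod_cast hcount
    linarith
  have h := le_csInf (by obtain ⟨es, hw⟩ := hconn; exact ⟨_, es, hw, rfl⟩) hbound
  unfold fppDistF
  unfold fppDistF at h
  linarith

end

open scoped Classical in
/-- for `f(ω) = dist_ω(u,w)` a first passage percolation distance with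
weights in `{a,b}`, `0 < a < b`, one has `‖ρ_e f‖_∞ ≤ (b-a)/2`,
`P[ρ_e f ≠ 0] = 2 P[ρ_e f < 0]`, and consequently
`‖ρ_e f‖₂² ≤ (1/2)(b-a)² P[ρ_e f < 0]` under the uniform measure on `{a,b}^J`. -/
theorem stmt12 {V J : Type*} [Fintype J] [DecidableEq J] (a b : ℝ)
    (hab : 0 < a ∧ a < b) (ep : J → V × V) (u w : V)
    (hconn : ∃ es : List J, IsWalk ep u w es)
    (f : (J → Bool) → ℝ) (hf : ∀ ω, f ω = fppDistF a b ep u w ω) (e : J) :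
    (∀ ω, |rhoD e f ω| ≤ (b - a) / 2) ∧
    ((Finset.univ.filter fun ω : J → Bool => rhoD e f ω ≠ 0).card : ℝ) / 2 ^ Fintype.card J
      = 2 * (((Finset.univ.filter fun ω : J → Bool => rhoD e f ω < 0).card : ℝ)
          / 2 ^ Fintype.card J) ∧
    (∑ ω : J → Bool, rhoD e f ω ^ 2) / 2 ^ Fintype.card J
      ≤ (1 / 2) * (b - a) ^ 2 *
        (((Finset.univ.filter fun ω : J → Bool => rhoD e f ω < 0).card : ℝ)
          / 2 ^ Fintype.card J) := by
  obtain ⟨ha, hb⟩ := hab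
  set g : (J → Bool) → (J → Bool) := fun ω => Function.update ω e (!ω e) with hgdef
  have hgg : ∀ ω, g (g ω) = ω := by
    intro ω; funext j
    by_cases hj : j = e
    · subst hj; simp [g]
    · simp [g, Function.update_of_ne hj]
  have hrho_g : ∀ ω, rhoD e f (g ω) = - rhoD e f ω := by
    intro ω
    have h1 : rhoD e f (g ω) = (f (g ω) - f (g (g ω))) / 2 := rfl
    have h2 : rhoD e f ω = (f ω - f (g ω)) / 2 := rfl
    rw [h1, hgg ω, h2]; ring
  -- value of rho
  have hval1 : ∀ ω : J → Bool, ω e = true →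
      rhoD e f ω = (fppDistF a b ep u w (Function.update ω e true)
        - fppDistF a b ep u w (Function.update ω e false)) / 2 := by
    intro ω he
    have hω : Function.update ω e true = ω := by
      funext j; by_cases hj : j = e
      · subst hj; simp [he]
      · simp [Function.update_of_ne hj]
    simp only [rhoD, he, Bool.not_true, hω, hf]
  have hval0 : ∀ ω : J → Bool, ω e = false →
      rhoD e f ω = (fppDistF a b ep u w (Function.update ω e false)
        - fppDistF a b ep u w (Function.update ω e true)) / 2 := by
    intro ω he
    have hω : Function.update ω e false = ω := by
      funext j; by_cases hj : j = e
      · subst hj; simp [he]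
      · simp [Function.update_of_ne hj]
    simp only [rhoD, he, Bool.not_false, hω, hf]
  have habs : ∀ ω, |rhoD e f ω| ≤ (b - a) / 2 := by
    intro ω
    have hm := fpp_mono ha hb hconn e ω
    have hl := fpp_lip ha hb hconn e ω
    rcases Bool.eq_false_or_eq_true (ω e) with he | he
    · rw [hval1 ω he, abs_le]; constructor <;> [linarith; linarith]
    · rw [hval0 ω he, abs_le]; constructor <;> [linarith; linarith]
  -- counting
  have hmapsto : ∀ ω : J → Bool, rhoD e f ω < 0 → 0 < rhoD e f (g ω) := by
    intro ω hω; rw [hrho_g]; linarith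
  have hmapsto' : ∀ ω : J → Bool, 0 < rhoD e f ω → rhoD e f (g ω) < 0 := by
    intro ω hω; rw [hrho_g]; linarith
  have hbij : (univ.filter fun ω : J → Bool => 0 < rhoD e f ω).card
      = (univ.filter fun ω : J → Bool => rhoD e f ω < 0).card := by
    apply Finset.card_bij' (fun ω _ => g ω) (fun ω _ => g ω)
    · intro ω hω
      simp only [mem_filter, mem_univ, true_and] at hω ⊢
      exact hmapsto' ω hω
    · intro ω hω
      simp only [mem_filter, mem_univ, true_and] at hω ⊢
      exact hmapsto ω hω
    · intro ω _; exact hgg ω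
    · intro ω _; exact hgg ω
  have hsplit : (univ.filter fun ω : J → Bool => rhoD e f ω ≠ 0)
      = (univ.filter fun ω : J → Bool => rhoD e f ω < 0)
        ∪ (univ.filter fun ω : J → Bool => 0 < rhoD e f ω) := by
    rw [← Finset.filter_or]
    apply Finset.filter_congr
    intro ω _
    constructor
    · intro h; rcases lt_or_gt_of_ne h with h | h
      · exact Or.inl h
      · exact Or.inr h
    · rintro (h | h) <;> [exact ne_of_lt h; exact ne_of_gt h]
  have hdisj : Disjoint (univ.filter fun ω : J → Bool => rhoD e f ω < 0)
      (univ.filter fun ω : J → Bool => 0 < rhoD e f ω) := by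
    rw [Finset.disjoint_filter]
    intro ω _ h1 h2
    linarith
  have hcard : (univ.filter fun ω : J → Bool => rhoD e f ω ≠ 0).card
      = 2 * (univ.filter fun ω : J → Bool => rhoD e f ω < 0).card := by
    rw [hsplit, Finset.card_union_of_disjoint hdisj, hbij]; ring
  refine ⟨habs, ?_, ?_⟩
  · rw [hcard]; push_cast; ring
  · have hsum : ∑ ω : J → Bool, rhoD e f ω ^ 2
        = ∑ ω ∈ (univ.filter fun ω : J → Bool => rhoD e f ω ≠ 0), rhoD e f ω ^ 2 := by
      rw [Finset.sum_filter_of_ne]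
      intro x _ h h0
      exact h (by rw [h0]; ring)
    have hbd : ∀ ω ∈ (univ.filter fun ω : J → Bool => rhoD e f ω ≠ 0),
        rhoD e f ω ^ 2 ≤ ((b - a) / 2) ^ 2 := by
      intro ω _
      calc rhoD e f ω ^ 2 = |rhoD e f ω| ^ 2 := (sq_abs _).symm
        _ ≤ ((b - a) / 2) ^ 2 := by
            apply pow_le_pow_left₀ (abs_nonneg _) (habs ω)
    have hle := Finset.sum_le_card_nsmul _ _ _ hbd
    have key : ∑ ω : J → Bool, rhoD e f ω ^ 2
        ≤ (1 / 2) * (b - a) ^ 2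
          * ((univ.filter fun ω : J → Bool => rhoD e f ω < 0).card : ℝ) := by
      rw [hsum]
      calc ∑ ω ∈ (univ.filter fun ω : J → Bool => rhoD e f ω ≠ 0), rhoD e f ω ^ 2
          ≤ ((univ.filter fun ω : J → Bool => rhoD e f ω ≠ 0).card : ℝ)
            * ((b - a) / 2) ^ 2 := by simpa [nsmul_eq_mul] using hle
        _ = (1 / 2) * (b - a) ^ 2
            * ((univ.filter fun ω : J → Bool => rhoD e f ω < 0).card : ℝ) := by
            rw [hcard]; push_cast; ring
    calc (∑ ω : J → Bool, rhoD e f ω ^ 2) / 2 ^ Fintype.card J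
        ≤ ((1 / 2) * (b - a) ^ 2
            * ((univ.filter fun ω : J → Bool => rhoD e f ω < 0).card : ℝ))
          / 2 ^ Fintype.card J := by gcongr
      _ = (1 / 2) * (b - a) ^ 2
          * (((univ.filter fun ω : J → Bool => rhoD e f ω < 0).card : ℝ)
            / 2 ^ Fintype.card J) := by ring
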